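/- arXiv:2402.18250 — 8 statements merged into one kernel-verified Lean document; each statement's English description precedes it below -/
import Mathlib

section
/- Let X be a set, and let λ and μ be cardinals. Suppose that for each α < μ, F_α ⊆ 2^X is a family of functions X → 2, and let F = ⋃_{α<μ} F_α. If F shatters a set A ⊆ X of cardinality μ·λ (i.e., every function A → 2 is a restriction of some element of F), then there exists α < μ such that F_α shatters some subset of X of cardinality λ. -/
universe u

open Cardinal

/-- `F` shatters `A` if every function `A → Bool` extends to an element of `F`. -/
def Shatters {X : Type u} (F : Set (X → Bool)) (A : Set X) : Prop :=
  ∀ g : X → Bool, ∃ f ∈ F, ∀ a ∈ A, f a = g a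

/-- If a union of `μ` many families shatters a set of cardinality `μ * λ`, then one of
the families shatters a set of cardinality `λ`. -/
theorem stmt0 {X : Type u} (lam mu : Cardinal.{u}) (ι : Type u) (hι : #ι = mu)
    (Fam : ι → Set (X → Bool)) (A : Set X) (hA : #A = mu * lam)
    (h : Shatters (⋃ i, Fam i) A) :
    ∃ i, ∃ B : Set X, #B = lam ∧ Shatters (Fam i) B := by
  classical
  -- A has the same cardinality as ι × lam.out
  have hcard : #A = #(ι × lam.out) := by
    rw [hA, Cardinal.mk_prod, hι, Cardinal.mk_out, Cardinal.lift_id, Cardinal.lift_id]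
  obtain ⟨e⟩ := Cardinal.eq.mp hcard
  -- the pieces
  set B : ι → Set X := fun i => Subtype.val '' {a : A | (e a).1 = i} with hB
  have hBsub : ∀ i, B i ⊆ A := by
    rintro i x ⟨a, _, rfl⟩; exact a.2
  have hBcard : ∀ i, #(B i) = lam := by
    intro i
    rw [hB]
    rw [Cardinal.mk_image_eq Subtype.val_injective]
    have : {a : A | (e a).1 = i} ≃ lam.out :=
      { toFun := fun a => (e a.1).2
        invFun := fun p => ⟨e.symm (i, p), by simp⟩
        left_inv := by
          rintro ⟨a, ha⟩
          simp only [Set.mem_setOf_eq] at ha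
          ext
          simp only
          rw [← ha]
          simp [Prod.ext_iff]
        right_inv := by intro p; simp }
    rw [Cardinal.mk_congr this, Cardinal.mk_out]
  by_contra hcon
  push_neg at hcon
  -- for each i, Fam i does not shatter B i, so pick a witness function
  have hw : ∀ i, ∃ g : X → Bool, ∀ f ∈ Fam i, ∃ a ∈ B i, f a ≠ g a := by
    intro i
    have := hcon i (B i) (hBcard i)
    unfold Shatters at this
    push_neg at this
    exact this
  choose g hg using hw
  -- combine into a single function
  set G : X → Bool := fun x => if hx : x ∈ A then g (e ⟨x, hx⟩).1 x else true with hG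
  obtain ⟨f, hf, hfG⟩ := h G
  obtain ⟨i, hfi⟩ := Set.mem_iUnion.mp hf
  obtain ⟨a, haB, hfa⟩ := hg i f hfi
  apply hfa
  have haA : a ∈ A := hBsub i haB
  have h1 : G a = g i a := by
    rw [hG]
    simp only [dif_pos haA]
    obtain ⟨a', ha', rfl⟩ := haB
    have : (⟨a'.1, haA⟩ : A) = a' := Subtype.ext rfl
    rw [this, ha']
  rw [← h1]
  exact hfG a haA
end

section
/- Let δ and κ be infinite cardinals. The collection S(δ,κ) = {F ⊆ 2^κ : sdim(F) < δ} is closed under unions of fewer than cf(δ) many members. That is, if μ < cf(δ) and F_α ∈ S(δ,κ) for all α < μ, then ⋃_{α<μ} F_α ∈ S(δ,κ). -/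
universe u

open Cardinal

/-- The string dimension of `F`: the least cardinal `δ` such that `F` shatters no
set of cardinality `δ`. -/
noncomputable def sdim {X : Type u} (F : Set (X → Bool)) : Cardinal.{u} :=
  sInf {δ : Cardinal.{u} | ∀ A : Set X, #A = δ → ¬ Shatters F A}

/-- `S(δ,κ)`, the collection of families of string dimension `< δ`, is closed under
unions of fewer than `cf(δ)` many members. -/
theorem stmt1 (δ κ : Cardinal.{u}) (hδ : ℵ₀ ≤ δ) (hκ : ℵ₀ ≤ κ)
    (K : Type u) (hK : #K = κ)
    (μ : Cardinal.{u}) (hμ : μ < (Cardinal.ord δ).cof)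
    (ι : Type u) (hι : #ι = μ)
    (Fam : ι → Set (K → Bool)) (h : ∀ i, sdim (Fam i) < δ) :
    sdim (⋃ i, Fam i) < δ := by
  classical
  set S : ι → Cardinal.{u} := fun i => sdim (Fam i) with hSdef
  -- `sdim F` belongs to its defining set
  have mem : ∀ F : Set (K → Bool), ∀ A : Set K, #A = sdim F → ¬ Shatters F A := by
    intro F
    have hne : {δ' : Cardinal.{u} | ∀ A : Set K, #A = δ' → ¬ Shatters F A}.Nonempty := by
      refine ⟨Order.succ κ, fun A hA hsh => ?_⟩
      have h1 : #A ≤ κ := hK ▸ Cardinal.mk_set_le A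
      rw [hA] at h1
      exact absurd h1 (not_le.mpr (Order.lt_succ κ))
    exact csInf_mem hne
  set lam : Cardinal.{u} := Cardinal.sum S with hlam
  have hmem : ∀ A : Set K, #A = lam → ¬ Shatters (⋃ i, Fam i) A := by
    intro A hA hsh
    have hAeq : #(Σ i, Quotient.out (S i)) = #A := by
      rw [Cardinal.mk_sigma, hA]
      simp [hlam]
    obtain ⟨e⟩ := Cardinal.eq.mp hAeq
    set Asub : ι → Set K := fun i =>
      Set.range (fun t : Quotient.out (S i) => (e ⟨i, t⟩ : K)) with hAsubdef
    have hAsub_card : ∀ i, #(Asub i) = S i := by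
      intro i
      rw [hAsubdef]
      rw [Cardinal.mk_range_eq]
      · exact Cardinal.mk_out _
      · intro t t' htt
        have h2 : (⟨i, t⟩ : Σ j, Quotient.out (S j)) = ⟨i, t'⟩ :=
          e.injective (Subtype.ext htt)
        exact eq_of_heq (Sigma.mk.inj_iff.mp h2).2
    have hbad : ∀ i, ∃ g : K → Bool, ∀ f ∈ Fam i, ∃ a ∈ Asub i, f a ≠ g a := by
      intro i
      have h3 := mem (Fam i) (Asub i) (hAsub_card i)
      unfold Shatters at h3
      push_neg at h3
      exact h3
    choose g hg using hbad
    set G : K → Bool := fun x =>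
      if hx : x ∈ A then g (e.symm ⟨x, hx⟩).1 x else false with hGdef
    obtain ⟨f, hf, hfa⟩ := hsh G
    obtain ⟨i, hfi⟩ := Set.mem_iUnion.mp hf
    obtain ⟨a, ha, hane⟩ := hg i f hfi
    obtain ⟨t, ht⟩ := ha
    have haA : a ∈ A := ht ▸ (e ⟨i, t⟩).2
    apply hane
    have h1 : f a = G a := hfa a haA
    have h2 : G a = g i a := by
      rw [hGdef]
      simp only [dif_pos haA]
      have h4 : (⟨a, haA⟩ : A) = e ⟨i, t⟩ := Subtype.ext ht.symm
      rw [h4, Equiv.symm_apply_apply]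
    rw [h1, h2]
  have hle : sdim (⋃ i, Fam i) ≤ lam := csInf_le (OrderBot.bddBelow _) hmem
  refine hle.trans_lt ?_
  have hsup : iSup S < δ := Ordinal.iSup_lt (hι ▸ hμ) h
  have hι' : #ι < δ := hι ▸ hμ.trans_le (Ordinal.cof_ord_le δ)
  calc lam ≤ #ι * iSup S := Cardinal.sum_le_mk_mul_iSup S
    _ < δ := Cardinal.mul_lt_of_lt hδ hι' hsup
end

section
/- Let κ be an infinite cardinal and F ⊆ 2^κ with sdim(F) < cf(κ). Then the topological closure of F in 2^κ (with the bounded-support product topology, whose basic open sets are [t] = {x ∈ 2^κ : t ⊆ x} for t : α → 2 with α < κ) has the same string dimension as F: sdim(cl(F)) = sdim(F). -/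
universe u

open Cardinal

/-- The closure of `F ⊆ 2^κ` in the bounded-support product topology: those `x` which,
for every proper initial segment, agree with some element of `F` on that segment.
(Here `2^κ` is realised as functions on the canonical well-order of type `κ`, so
initial segments determined by ordinals `α < κ` are exactly the sets `{b | b ≤ a}`,
`κ` being a limit ordinal.) -/
def clb {K : Type u} [LinearOrder K] (F : Set (K → Bool)) : Set (K → Bool) :=
  {x | ∀ a : K, ∃ y ∈ F, ∀ b ≤ a, x b = y b}

lemma shatters_subset {X : Type u} {F : Set (X → Bool)} {A B : Set X}
    (hF : Shatters F A) (hBA : B ⊆ A) : Shatters F B := fun g => by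
  obtain ⟨f, hf, hfa⟩ := hF g
  exact ⟨f, hf, fun a ha => hfa a (hBA ha)⟩

lemma sdim_set_nonempty {X : Type u} (F : Set (X → Bool)) :
    {δ : Cardinal.{u} | ∀ A : Set X, #A = δ → ¬ Shatters F A}.Nonempty := by
  refine ⟨Order.succ (#X), fun A hA _ => ?_⟩
  have h1 : #A ≤ #X := Cardinal.mk_set_le A
  rw [hA] at h1
  exact lt_irrefl _ (lt_of_lt_of_le (Order.lt_succ (#X)) h1)

lemma sdim_not_shatters {X : Type u} (F : Set (X → Bool)) (A : Set X)
    (hA : #A = sdim F) : ¬ Shatters F A :=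
  csInf_mem (sdim_set_nonempty F) A hA

/-- If `sdim F < cf(κ)` then the closure of `F` in the bounded-support product topology
on `2^κ` has the same string dimension as `F`. -/
theorem stmt2 (κ : Cardinal.{u}) (hκ : ℵ₀ ≤ κ)
    (F : Set ((Cardinal.ord κ).ToType → Bool))
    (h : sdim F < (Cardinal.ord κ).cof) :
    sdim (clb F) = sdim F := by
  apply le_antisymm
  · -- sdim (clb F) ≤ sdim F : sdim F is in the defining set for clb F
    apply csInf_le (OrderBot.bddBelow _)
    intro A hA hsh
    -- A is bounded since #A = sdim F < cof κ
    have hbd : Set.Bounded ((· < ·) : κ.ord.ToType → κ.ord.ToType → Prop) A := by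
      haveI : IsWellOrder κ.ord.ToType ((· < ·) : κ.ord.ToType → κ.ord.ToType → Prop) :=
        isWellOrder_lt
      refine not_isCofinal_iff.mp fun hc => ?_
      rw [← Ordinal.cof_toType, ← hA] at h
      exact (Order.cof_le hc).not_gt h
    obtain ⟨a, ha⟩ := hbd
    -- clb F shatters A implies F shatters A
    apply sdim_not_shatters F A hA
    intro g
    obtain ⟨x, hx, hxg⟩ := hsh g
    obtain ⟨y, hy, hxy⟩ := hx a
    exact ⟨y, hy, fun b hb => ((hxy b (ha b hb).le).symm.trans (hxg b hb))⟩
  · -- sdim F ≤ sdim (clb F) since F ⊆ clb F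
    apply csInf_le_csInf (OrderBot.bddBelow _) (sdim_set_nonempty _)
    intro δ hδ A hA hsh
    apply hδ A hA
    intro g
    obtain ⟨f, hf, hfa⟩ := hsh g
    exact ⟨f, fun a => ⟨f, hf, fun _ _ => rfl⟩, hfa⟩
end

section
/- Let κ be an infinite cardinal and F ⊆ 2^κ with sdim(F) < κ. Then F is nowhere dense in 2^κ with the bounded-support product topology: for every s ∈ 2^{<κ} there is t ∈ 2^{<κ} extending s such that [t] ∩ F = ∅. -/
universe u

open Cardinal

/-- If `sdim F < κ` then `F` is nowhere dense in `2^κ` with the bounded-support product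
topology: every basic open set `[s]` (a string `s` of length `a < κ`) contains a basic
open set `[t]` (a string `t` of length `b ≥ a` extending `s`) disjoint from `F`. -/
theorem stmt4 (κ : Cardinal.{u}) (hκ : ℵ₀ ≤ κ)
    (F : Set ((Cardinal.ord κ).ToType → Bool))
    (h : sdim F < κ) :
    ∀ (a : (Cardinal.ord κ).ToType) (s : (Cardinal.ord κ).ToType → Bool),
      ∃ b, a ≤ b ∧ ∃ t : (Cardinal.ord κ).ToType → Bool,
        (∀ c < a, t c = s c) ∧ ∀ x ∈ F, ∃ c < b, x c ≠ t c := by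
  classical
  intro a s
  -- sdim F belongs to its defining set
  have hne : {δ : Cardinal.{u} |
      ∀ A : Set (Cardinal.ord κ).ToType, #A = δ → ¬ Shatters F A}.Nonempty := by
    refine ⟨Order.succ (#((Cardinal.ord κ).ToType)), fun A hA _ => ?_⟩
    have h1 : #A ≤ #((Cardinal.ord κ).ToType) := Cardinal.mk_set_le A
    rw [hA] at h1
    exact absurd h1 (not_le.mpr (Order.lt_succ _))
  have hmem : sdim F ∈ {δ : Cardinal.{u} |
      ∀ A : Set (Cardinal.ord κ).ToType, #A = δ → ¬ Shatters F A} := csInf_mem hne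
  -- set up ordinals
  let e := Ordinal.ToType.mk (o :=  κ.ord)
  let α : Ordinal.{u} := (e.symm a : Set.Iio κ.ord)
  have hα : α < κ.ord := (e.symm a).2
  have hea : e ⟨α, hα⟩ = a := by
    show e (e.symm a) = a
    exact e.apply_symm_apply a
  have hαcard : α.card < κ := Cardinal.lt_ord.mp hα
  have hb' : α + (sdim F).ord < κ.ord := by
    rw [Cardinal.lt_ord, Ordinal.card_add, Cardinal.card_ord]
    exact Cardinal.add_lt_of_lt hκ hαcard h
  let b : (Cardinal.ord κ).ToType := e ⟨α + (sdim F).ord, hb'⟩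
  -- the interval [a, b)
  let I : Set (Cardinal.ord κ).ToType := {c | a ≤ c ∧ c < b}
  -- an injection from (sdim F).ord.ToType into I
  let eδ := Ordinal.ToType.mk (o :=  (sdim F).ord)
  have hinj : sdim F ≤ #I := by
    have hmkδ : #((sdim F).ord.ToType) = sdim F := Cardinal.mk_ord_toType (sdim F)
    rw [← hmkδ]
    refine Cardinal.mk_le_of_injective (f := fun o =>
      (⟨e ⟨α + (eδ.symm o : Set.Iio (sdim F).ord),
          Set.mem_Iio.mpr (lt_trans (add_lt_add_right (eδ.symm o).2 α) hb')⟩, ?_⟩ : I)) ?_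
    · constructor
      · rw [← hea]
        exact e.monotone (show α ≤ α + _ from le_self_add)
      · show e _ < e _
        rw [e.lt_iff_lt]
        exact_mod_cast add_lt_add_right (eδ.symm o).2 α
    · intro o₁ o₂ hoo
      have h1 := Subtype.ext_iff.mp hoo
      have h2 := e.injective h1
      have h3 : (α + (eδ.symm o₁ : Set.Iio (sdim F).ord) : Ordinal)
          = α + (eδ.symm o₂ : Set.Iio (sdim F).ord) := Subtype.ext_iff.mp h2
      have h4 : ((eδ.symm o₁ : Set.Iio (sdim F).ord) : Ordinal)
          = (eδ.symm o₂ : Set.Iio (sdim F).ord) := add_left_cancel_iff.mp h3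
      exact eδ.symm.injective (Subtype.ext h4)
  -- choose A ⊆ I of cardinality sdim F
  obtain ⟨A, hAI, hAcard⟩ := Cardinal.le_mk_iff_exists_subset.mp hinj
  have hnsh : ¬ Shatters F A := hmem A hAcard
  rw [Shatters] at hnsh
  push_neg at hnsh
  obtain ⟨g, hg⟩ := hnsh
  refine ⟨b, ?_, fun c => if c ∈ A then g c else s c, ?_, ?_⟩
  · rw [← hea]
    exact e.monotone (show α ≤ α + _ from le_self_add)
  · intro c hc
    have hcA : c ∉ A := fun hcA => absurd (hAI hcA).1 (not_le.mpr hc)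
    simp [hcA]
  · intro x hx
    obtain ⟨c, hcA, hcx⟩ := hg x hx
    refine ⟨c, (hAI hcA).2, ?_⟩
    simpa [hcA] using hcx
end

section
/- (Sauer–Shelah dichotomy) Let X be an infinite set and F ⊆ 2^X. Define f_F(n) = max{|F↾A| : A ⊆ X, |A| = n}. Then either f_F(n) = 2^n for all n < ω, or there is d < ω such that f_F(n) ≤ n^d for all n ≥ d. -/
universe u

/-- The number of distinct restrictions of elements of `F` to the finite set `A`. -/
noncomputable def resCard {X : Type u} (F : Set (X → Bool)) (A : Finset X) : ℕ :=
  Nat.card {g : {x // x ∈ A} → Bool | ∃ f ∈ F, ∀ a : {x // x ∈ A}, f a = g a}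

open Finset

variable {X : Type u}

/-- The trace family of `F` on `A` as a finset of finsets. -/
noncomputable def traceF (F : Set (X → Bool)) (A : Finset X) : Finset (Finset {x // x ∈ A}) := by
  classical
  exact Set.Finite.toFinset (Set.toFinite
    ((fun g : {x // x ∈ A} → Bool => Finset.univ.filter (fun a => g a = true)) ''
      {g | ∃ f ∈ F, ∀ a : {x // x ∈ A}, f a = g a}))

lemma resCard_eq_card_traceF (F : Set (X → Bool)) (A : Finset X) :
    resCard F A = (traceF F A).card := by
  classical
  have hinj : Function.Injective
      (fun g : {x // x ∈ A} → Bool => Finset.univ.filter (fun a => g a = true)) := by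
    intro g g' h
    funext a
    have := Finset.ext_iff.1 h a
    simp only [Finset.mem_filter, Finset.mem_univ, true_and] at this
    cases hg : g a <;> cases hg' : g' a <;> simp [hg, hg'] at this ⊢
  rw [resCard, ← Nat.card_image_of_injective hinj
    ({g : {x // x ∈ A} → Bool | ∃ f ∈ F, ∀ a : {x // x ∈ A}, f a = g a}),
    Nat.card_coe_set_eq, Set.ncard_eq_toFinset_card _ (Set.toFinite _), traceF]

lemma resCard_of_shatters [DecidableEq X] {F : Set (X → Bool)} {A : Finset X} {s : Finset {x // x ∈ A}}
    (hs : (traceF F A).Shatters s) :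
    resCard F (s.image Subtype.val) = 2 ^ s.card := by
  classical
  set B := s.image Subtype.val with hB
  have hmem : ∀ a : {x // x ∈ A}, a ∈ s → (a : X) ∈ B := fun a ha =>
    Finset.mem_image.2 ⟨a, ha, rfl⟩
  have huniv : {g : {x // x ∈ B} → Bool | ∃ f ∈ F, ∀ b : {x // x ∈ B}, f b = g b} =
      Set.univ := by
    ext h
    simp only [Set.mem_univ, iff_true, Set.mem_setOf_eq]
    set t := s.filter (fun a : {x // x ∈ A} => ∃ hb : (a : X) ∈ B, h ⟨a, hb⟩ = true) with ht
    have hts : t ⊆ s := by rw [ht]; exact Finset.filter_subset _ s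
    obtain ⟨u, hu, hsu⟩ := hs hts
    rw [traceF, Set.Finite.mem_toFinset] at hu
    obtain ⟨g, ⟨f, hf, hfg⟩, hgu⟩ := hu
    refine ⟨f, hf, fun b => ?_⟩
    obtain ⟨a, haS, hab⟩ := Finset.mem_image.1 b.2
    have hb : b = ⟨(a : X), hmem a haS⟩ := Subtype.ext hab.symm
    have h1 : f b = g a := by rw [hb]; exact hfg a
    have h2 : g a = true ↔ a ∈ u := by
      rw [← hgu]; simp
    have h3 : a ∈ u ↔ a ∈ t := by
      constructor
      · intro hau
        rw [← hsu]; exact Finset.mem_inter.2 ⟨haS, hau⟩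
      · intro hat
        have : a ∈ s ∩ u := hsu ▸ hat
        exact (Finset.mem_inter.1 this).2
    have h4 : a ∈ t ↔ h b = true := by
      rw [ht, Finset.mem_filter, hb]
      constructor
      · rintro ⟨-, hb', hh⟩; exact hh
      · intro hh; exact ⟨haS, hmem a haS, hh⟩
    have h5 : g a = true ↔ h b = true := h2.trans (h3.trans h4)
    rw [h1]
    cases hgb : g a <;> cases hhb : h b <;> simp_all
  rw [resCard, huniv]
  have hfun : Nat.card ({x // x ∈ B} → Bool) = 2 ^ B.card := by
    rw [Nat.card_fun]
    simp [Nat.card_eq_fintype_card]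
  rw [Nat.card_univ, hfun, hB, Finset.card_image_of_injective _ Subtype.val_injective]

/-- Sauer–Shelah dichotomy: for `F ⊆ 2^X` with `X` infinite, either the shatter
function `f_F(n) = max {|F↾A| : |A| = n}` equals `2^n` for all `n`, or there is `d`
such that `f_F(n) ≤ n^d` for all `n ≥ d`. -/
theorem stmt7 {X : Type u} [Infinite X] (F : Set (X → Bool)) :
    (∀ n : ℕ, ∃ A : Finset X, A.card = n ∧ resCard F A = 2 ^ n) ∨
    (∃ d : ℕ, ∀ n, d ≤ n → ∀ A : Finset X, A.card = n → resCard F A ≤ n ^ d) := by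
  classical
  by_cases hL : ∀ n : ℕ, ∃ A : Finset X, A.card = n ∧ resCard F A = 2 ^ n
  · exact Or.inl hL
  right
  push_neg at hL
  obtain ⟨n0, hn0⟩ := hL
  rcases Nat.eq_zero_or_pos n0 with h0 | hpos
  · -- then F must be empty
    subst h0
    have hF : F = ∅ := by
      by_contra hne
      obtain ⟨f, hf⟩ := Set.nonempty_iff_ne_empty.2 hne
      apply hn0 ∅ rfl
      have : {g : {x // x ∈ (∅ : Finset X)} → Bool |
          ∃ f ∈ F, ∀ a : {x // x ∈ (∅ : Finset X)}, f a = g a} = Set.univ := by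
        ext g
        simp only [Set.mem_univ, iff_true, Set.mem_setOf_eq]
        exact ⟨f, hf, fun a => (Finset.notMem_empty _ a.2).elim⟩
      rw [resCard, this, Nat.card_univ, Nat.card_fun]
      simp [Nat.card_eq_fintype_card]
    refine ⟨0, fun n _ A _ => ?_⟩
    have h1 : {g : {x // x ∈ A} → Bool | ∃ f ∈ F, ∀ a : {x // x ∈ A}, f a = g a} = ∅ := by
      simp [hF]
    have h2 : resCard F A = 0 := by rw [resCard, h1]; simp
    simp [h2]
  · refine ⟨n0 + 2, fun n hn A hA => ?_⟩
    have hn1 : 1 ≤ n := le_trans (by omega) hn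
    have key : (traceF F A).vcDim < n0 := by
      by_contra hv
      push_neg at hv
      obtain ⟨s, hsm, hcard⟩ := (Finset.le_sup_iff (by simpa using hpos)).1 hv
      obtain ⟨s', hs's, hs'card⟩ := Finset.exists_subset_card_eq hcard
      have hsh : (traceF F A).Shatters s' := (Finset.mem_shatterer.1 hsm).mono_right hs's
      exact hn0 _
        (by rw [Finset.card_image_of_injective _ Subtype.val_injective, hs'card])
        (by rw [resCard_of_shatters hsh, hs'card])
    set v := (traceF F A).vcDim with hv
    calc resCard F A = (traceF F A).card := resCard_eq_card_traceF F A
      _ ≤ (traceF F A).shatterer.card := Finset.card_le_card_shatterer _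
      _ ≤ ∑ k ∈ Iic v, (Fintype.card {x // x ∈ A}).choose k :=
          Finset.card_shatterer_le_sum_vcDim
      _ = ∑ k ∈ Iic v, n.choose k := by rw [Fintype.card_coe, hA]
      _ ≤ ∑ k ∈ Iic v, n ^ v := by
          refine Finset.sum_le_sum fun k hk => ?_
          exact le_trans (Nat.choose_le_pow n k)
            (Nat.pow_le_pow_right hn1 (Finset.mem_Iic.1 hk))
      _ = (v + 1) * n ^ v := by simp [Nat.card_Iic, mul_comm]
      _ ≤ n * n ^ (n0 + 1) := by
          have h1 : v + 1 ≤ n := by omega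
          have h2 : n ^ v ≤ n ^ (n0 + 1) := Nat.pow_le_pow_right hn1 (by omega)
          exact Nat.mul_le_mul h1 h2
      _ = n ^ (n0 + 2) := by ring
end

section
/- For every infinite cardinal κ, 𝔰𝔡(κ⁺,κ) ≥ κ⁺. That is, if {F_α : α < λ} is a family of subsets of 2^κ with λ ≤ κ whose union is 2^κ, then some F_α shatters a subset of κ of cardinality κ. -/
universe u

open Cardinal

/-- `𝔰𝔡(δ,κ)`: the least cardinality of a family of subsets of `2^κ`, each of string
dimension `< δ`, whose union is all of `2^κ`. -/
noncomputable def StringCov (δ κ : Cardinal.{u}) : Cardinal.{u} :=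
  sInf {c : Cardinal.{u} | ∃ 𝒜 : Set (Set (Quotient.out κ → Bool)),
    #𝒜 = c ∧ (∀ F ∈ 𝒜, sdim F < δ) ∧ ⋃₀ 𝒜 = Set.univ}

lemma shatters_mono {X : Type u} {F : Set (X → Bool)} {A B : Set X}
    (h : Shatters F A) (hBA : B ⊆ A) : Shatters F B := by
  intro g
  obtain ⟨f, hf, hfa⟩ := h g
  exact ⟨f, hf, fun a ha => hfa a (hBA ha)⟩

lemma main_aux (κ : Cardinal.{u}) (hκ : ℵ₀ ≤ κ)
    (ι : Type u) (hι : #ι ≤ κ) (Fam : ι → Set (Quotient.out κ → Bool))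
    (hcov : (⋃ i, Fam i) = Set.univ) :
    ∃ i, ∃ A : Set (Quotient.out κ), #A = κ ∧ Shatters (Fam i) A := by
  classical
  have hmkX : #(Quotient.out κ) = κ := mk_out κ
  by_contra hcon
  push_neg at hcon
  have hle : #(ι × Quotient.out κ) ≤ #(Quotient.out κ) := by
    rw [Cardinal.mk_prod, Cardinal.lift_id, Cardinal.lift_id, hmkX]
    calc #ι * κ ≤ κ * κ := mul_le_mul_left hι κ
    _ = κ := Cardinal.mul_eq_self hκ
  obtain ⟨e⟩ := (Cardinal.le_def _ _).mp hle
  set A : ι → Set (Quotient.out κ) := fun i => Set.range (fun x : Quotient.out κ => e (i, x)) with hA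
  have hinj : ∀ i, Function.Injective (fun x : Quotient.out κ => e (i, x)) := by
    intro i x y hxy
    have := e.injective hxy
    exact (Prod.mk.injEq _ _ _ _ ▸ this).2
  have hAcard : ∀ i, #(A i) = κ := by
    intro i
    rw [hA]
    rw [Cardinal.mk_range_eq _ (hinj i), hmkX]
  have hg : ∀ i, ∃ g : Quotient.out κ → Bool, ∀ f ∈ Fam i, ∃ a ∈ A i, f a ≠ g a := by
    intro i
    have := hcon i (A i) (hAcard i)
    simp only [Shatters] at this
    push_neg at this
    exact this
  choose g hgspec using hg
  set G : Quotient.out κ → Bool := fun x =>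
    if h : ∃ p : ι × Quotient.out κ, e p = x then g h.choose.1 x else true with hG
  have hGkey : ∀ i (x : Quotient.out κ), G (e (i, x)) = g i (e (i, x)) := by
    intro i x
    have h : ∃ p : ι × Quotient.out κ, e p = e (i, x) := ⟨(i, x), rfl⟩
    simp only [hG, dif_pos h]
    congr 2
    exact congrArg Prod.fst (e.injective h.choose_spec)
  have hGmem : G ∈ ⋃ i, Fam i := by rw [hcov]; trivial
  obtain ⟨i₀, hi₀⟩ := Set.mem_iUnion.mp hGmem
  obtain ⟨a, ha, hne⟩ := hgspec i₀ G hi₀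
  obtain ⟨x, rfl⟩ := ha
  exact hne (hGkey i₀ x)

/-- `𝔰𝔡(κ⁺,κ) ≥ κ⁺`: whenever `2^κ` is covered by at most `κ` many families, one of the
families shatters a subset of `κ` of cardinality `κ`. -/
theorem stmt10 (κ : Cardinal.{u}) (hκ : ℵ₀ ≤ κ) :
    Order.succ κ ≤ StringCov (Order.succ κ) κ ∧
    ∀ (ι : Type u), #ι ≤ κ → ∀ Fam : ι → Set (Quotient.out κ → Bool),
      (⋃ i, Fam i) = Set.univ →
      ∃ i, ∃ A : Set (Quotient.out κ), #A = κ ∧ Shatters (Fam i) A := by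
  refine ⟨?_, fun ι hι Fam hcov => main_aux κ hκ ι hι Fam hcov⟩
  apply le_csInf
  · refine ⟨_, ⟨Set.range (fun f : Quotient.out κ → Bool =>
      ({f} : Set (Quotient.out κ → Bool))), rfl, ?_, ?_⟩⟩
    · rintro F ⟨f, rfl⟩
      have h1 : sdim ({f} : Set (Quotient.out κ → Bool)) ≤ 1 := by
        apply csInf_le'
        intro B hB hSh
        have hBne : B.Nonempty := by
          rw [Set.nonempty_iff_ne_empty]
          intro h
          rw [h] at hB
          simp at hB
        obtain ⟨a, ha⟩ := hBne
        obtain ⟨f', hf', hfa⟩ := hSh (fun _ => !(f a))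
        rw [Set.mem_singleton_iff] at hf'
        subst hf'
        have := hfa a ha
        simp at this
      calc sdim ({f} : Set (Quotient.out κ → Bool)) ≤ 1 := h1
      _ ≤ κ := one_lt_aleph0.le.trans hκ
      _ < Order.succ κ := Order.lt_succ κ
    · apply Set.eq_univ_of_forall
      intro f
      exact ⟨{f}, ⟨f, rfl⟩, rfl⟩
  · rintro c ⟨𝒜, rfl, hsd, hcover⟩
    rw [Order.succ_le_iff]
    by_contra hc
    push_neg at hc
    have hUnion : (⋃ F : ↥𝒜, (F : Set (Quotient.out κ → Bool))) = Set.univ := by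
      rw [← Set.sUnion_eq_iUnion]; exact hcover
    obtain ⟨i, A, hAcard, hSh⟩ := main_aux κ hκ ↥𝒜 hc (fun F => ↑F) hUnion
    have hFlt : sdim (i : Set (Quotient.out κ → Bool)) < Order.succ κ := hsd i i.2
    have hle : sdim (i : Set (Quotient.out κ → Bool)) ≤ κ := Order.lt_succ_iff.mp hFlt
    have hTne : {δ : Cardinal.{u} | ∀ B : Set (Quotient.out κ),
        #B = δ → ¬ Shatters (↑i) B}.Nonempty := by
      refine ⟨Order.succ κ, fun B hB _ => ?_⟩
      have hBle : #B ≤ κ := (Cardinal.mk_set_le B).trans_eq (mk_out κ)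
      rw [hB] at hBle
      exact absurd hBle (not_le.mpr (Order.lt_succ κ))
    have hmem : sdim (i : Set (Quotient.out κ → Bool)) ∈
        {δ : Cardinal.{u} | ∀ B : Set (Quotient.out κ),
        #B = δ → ¬ Shatters (↑i) B} := csInf_mem hTne
    have hsub : sdim (i : Set (Quotient.out κ → Bool)) ≤ #A := by
      rw [hAcard]; exact hle
    obtain ⟨A', hA'sub, hA'⟩ := Cardinal.le_mk_iff_exists_subset.mp hsub
    exact hmem A' hA' (shatters_mono hSh hA'sub)
end

section
/- If κ is a strong limit cardinal and δ is the least cardinal such that 2^δ ≥ cf(κ), then 𝔰𝔡(δ,κ) = 2^κ. In particular, if κ is strongly inaccessible then 𝔰𝔡(κ,κ) = 2^κ, and hence 𝔰𝔡(δ,κ) = 2^κ for all infinite δ ≤ κ. -/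
universe u

open Cardinal

-- Auxiliary material

open Set

/-- Index type for the coding: pairs `(i, u)` where `i` is an ordinal below `ord κ`
and `u` is a boolean function on partial binary strings of length `i`. -/
abbrev SIdx (κ : Cardinal.{u}) : Type u :=
  Σ i : κ.ord.ToType, ((Set.Iio i → Bool) → Bool)

/-- The coding map: `Phi0 κ x (i, u) = u (x ↾ i)`. -/
def Phi0 (κ : Cardinal.{u}) (x : κ.ord.ToType → Bool) (p : SIdx κ) : Bool :=
  p.2 (fun j => x j.1)

lemma mk_arrow_bool (α : Type u) : #(α → Bool) = 2 ^ #α := by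
  simp [Cardinal.mk_arrow]

lemma mk_SIdx {κ : Cardinal.{u}} (hκ : κ.IsStrongLimit) : #(SIdx κ) = κ := by
  have hO := Cardinal.mk_ord_toType κ
  apply le_antisymm
  · rw [Cardinal.mk_sigma]
    calc Cardinal.sum (fun i : κ.ord.ToType => #((Set.Iio i → Bool) → Bool))
        ≤ Cardinal.sum (fun _ : κ.ord.ToType => κ) := by
          apply Cardinal.sum_le_sum
          intro i
          have h1 : #(Set.Iio i) < κ := Cardinal.mk_Iio_ord_toType i
          have h2 : #(Set.Iio i → Bool) < κ := by
            rw [mk_arrow_bool]; exact hκ.two_power_lt h1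
          rw [mk_arrow_bool]
          exact (hκ.two_power_lt h2).le
      _ = κ := by rw [Cardinal.sum_const', hO, Cardinal.mul_eq_self hκ.aleph0_le]
  · calc κ = #κ.ord.ToType := hO.symm
      _ ≤ #(SIdx κ) := Cardinal.mk_le_of_injective
        (f := fun i : κ.ord.ToType => (⟨i, fun _ => false⟩ : SIdx κ))
        (fun a b h => congrArg Sigma.fst h)

lemma Phi0_injective {κ : Cardinal.{u}} (hκ : ℵ₀ ≤ κ) : Function.Injective (Phi0 κ) := by
  haveI : NoMaxOrder κ.ord.ToType := Cardinal.noMaxOrder hκ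
  intro x y hxy
  by_contra hne
  have : ∃ j, x j ≠ y j := by
    by_contra h
    push_neg at h
    exact hne (funext h)
  obtain ⟨j, hj⟩ := this
  obtain ⟨i, hji⟩ := exists_gt j
  classical
  set u : (Set.Iio i → Bool) → Bool :=
    fun r => decide (r = fun j' : Set.Iio i => x j'.1) with hu
  have h1 : Phi0 κ x ⟨i, u⟩ = true := by
    simp [Phi0, hu]
  have h2 : Phi0 κ y ⟨i, u⟩ = false := by
    simp only [Phi0, hu, decide_eq_false_iff_not]
    intro h
    have := congrFun h ⟨j, hji⟩
    exact hj (this.symm)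
  rw [hxy] at h1
  rw [h1] at h2
  exact Bool.noConfusion h2

/-- Separation of a small injective family at a single level. -/
lemma exists_level {κ : Cardinal.{u}} (hκ : ℵ₀ ≤ κ) {T : Type u}
    (w : T → (κ.ord.ToType → Bool)) (hw : Function.Injective w)
    (hT : #T < (Cardinal.ord κ).cof) :
    ∃ i : κ.ord.ToType,
      Function.Injective (fun t : T => (fun j : Set.Iio i => w t j.1)) := by
  classical
  haveI : Nonempty κ.ord.ToType := Cardinal.mk_ne_zero_iff.mp
    (by rw [Cardinal.mk_ord_toType]; exact (Cardinal.aleph0_pos.trans_le hκ).ne')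
  set g : T × T → κ.ord.ToType := fun p =>
    if h : ∃ j, w p.1 j ≠ w p.2 j then h.choose else Classical.arbitrary _ with hg
  have hlim : Order.IsSuccLimit (Cardinal.ord κ) := Cardinal.isSuccLimit_ord hκ
  haveI inst : IsWellOrder κ.ord.ToType (· < ·) := isWellOrder_lt
  have hbound : Set.Bounded (· < ·) (Set.range g) := by
    by_contra hnb
    have hcf : IsCofinal (Set.range g) := fun a => by
      obtain ⟨b, hb, hab⟩ := (not_bounded_iff _).mp hnb a
      exact ⟨b, hb, not_lt.mp hab⟩
    refine absurd (Order.cof_le hcf) (not_le.mpr ?_)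
    rw [Ordinal.cof_toType]
    calc #(Set.range g) ≤ #(T × T) := Cardinal.mk_range_le
      _ < (Cardinal.ord κ).cof := by
          have hPT : #(T × T) = #T * #T := by simp [Cardinal.mk_prod]
          rw [hPT]
          exact Cardinal.mul_lt_of_lt (Ordinal.aleph0_le_cof.2 hlim) hT hT
  obtain ⟨i, hi⟩ := hbound
  refine ⟨i, fun t t' htt => ?_⟩
  by_contra hne
  have hww : w t ≠ w t' := fun h => hne (hw h)
  have hex : ∃ j, w t j ≠ w t' j := by
    by_contra h
    push_neg at h
    exact hww (funext h)
  have hgi : g (t, t') < i := hi _ (Set.mem_range_self _)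
  have hgspec : w t (g (t, t')) ≠ w t' (g (t, t')) := by
    rw [hg]
    simp only [dif_pos hex]
    exact hex.choose_spec
  exact hgspec (congrFun htt ⟨g (t, t'), hgi⟩)

/-- Core lemma: a coding `Φ : 2^κ ↪ 2^X` (`#X = κ`) such that any subfamily of
`2^X` whose `Φ`-preimage is large shatters sets of every size `μ` with
`2^μ < cf(κ)`. -/
lemma exists_coding (κ : Cardinal.{u}) (hκ : κ.IsStrongLimit) :
    ∃ Φ : (κ.ord.ToType → Bool) → (Quotient.out κ → Bool), Function.Injective Φ ∧
      ∀ F : Set (Quotient.out κ → Bool), ∀ μ : Cardinal.{u},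
        2 ^ μ < (Cardinal.ord κ).cof → 2 ^ μ ≤ #(Φ ⁻¹' F) →
        ∃ A : Set (Quotient.out κ), #A = μ ∧ Shatters F A := by
  classical
  have hOut : #(Quotient.out κ) = κ := Cardinal.mk_out κ
  have hEq : #(SIdx κ) = #(Quotient.out κ) := by rw [mk_SIdx hκ, hOut]
  obtain ⟨e⟩ := Cardinal.eq.mp hEq
  refine ⟨fun x => Phi0 κ x ∘ e.symm, ?_, ?_⟩
  · intro x y h
    apply Phi0_injective hκ.aleph0_le
    funext p
    have := congrFun h (e p)
    simpa using this
  · intro F μ hmu hpre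
    set M := Quotient.out μ with hM
    have hMB : #(M → Bool) = 2 ^ μ := by rw [mk_arrow_bool, Cardinal.mk_out]
    -- an injection from patterns into the preimage of F
    have : #(M → Bool) ≤ #((fun x => Phi0 κ x ∘ e.symm) ⁻¹' F) := by rw [hMB]; exact hpre
    obtain ⟨w0⟩ := (Cardinal.le_def _ _).mp this
    set w : (M → Bool) → (κ.ord.ToType → Bool) := fun ε => (w0 ε : _) with hw
    have hwinj : Function.Injective w := fun a b h => w0.injective (Subtype.ext h)
    have hTcard : #(M → Bool) < (Cardinal.ord κ).cof := by rw [hMB]; exact hmu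
    obtain ⟨i, hi⟩ := exists_level hκ.aleph0_le w hwinj hTcard
    set r : (M → Bool) → (Set.Iio i → Bool) := fun ε => (fun j : Set.Iio i => w ε j.1) with hr
    have hrinj : Function.Injective r := hi
    set u : M → ((Set.Iio i → Bool) → Bool) :=
      fun m t => if h : ∃ ε, r ε = t then h.choose m else false with hu
    have hkey : ∀ (ε : M → Bool) (m : M), u m (r ε) = ε m := by
      intro ε m
      have h : ∃ ε', r ε' = r ε := ⟨ε, rfl⟩
      rw [hu]
      simp only [dif_pos h]
      rw [hrinj h.choose_spec]
    set a : M → Quotient.out κ := fun m => e ⟨i, u m⟩ with ha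
    have hainj : Function.Injective a := by
      intro m m' hmm
      by_contra hne
      have hsig : (⟨i, u m⟩ : SIdx κ) = ⟨i, u m'⟩ := e.injective hmm
      have huu : u m = u m' := eq_of_heq (Sigma.mk.inj_iff.mp hsig).2
      set ε : M → Bool := fun k => decide (k = m) with hε
      have h1 : u m (r ε) = true := by rw [hkey]; simp [hε]
      have h2 : u m' (r ε) = false := by
        rw [hkey]; simp [hε]; exact fun h => hne h.symm
      rw [huu] at h1
      rw [h1] at h2
      exact Bool.noConfusion h2
    refine ⟨Set.range a, by rw [Cardinal.mk_range_eq a hainj, hM, Cardinal.mk_out], ?_⟩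
    intro g
    set ε : M → Bool := fun m => g (a m) with hε
    refine ⟨Phi0 κ (w ε) ∘ e.symm, (w0 ε).2, ?_⟩
    rintro y ⟨m, rfl⟩
    show Phi0 κ (w ε) (e.symm (e ⟨i, u m⟩)) = g (a m)
    rw [Equiv.symm_apply_apply]
    show u m (r ε) = g (a m)
    rw [hkey, hε]

/-- The singleton cover: upper bound for `StringCov`. -/
lemma two_power_mem_stringCovSet (κ δ : Cardinal.{u}) (hδ : 2 ≤ δ) :
    (2 ^ κ) ∈ {c : Cardinal.{u} | ∃ 𝒜 : Set (Set (Quotient.out κ → Bool)),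
      #𝒜 = c ∧ (∀ F ∈ 𝒜, sdim F < δ) ∧ ⋃₀ 𝒜 = Set.univ} := by
  refine ⟨Set.range (fun f : Quotient.out κ → Bool => ({f} : Set _)), ?_, ?_, ?_⟩
  · rw [Cardinal.mk_range_eq _ (fun a b h => Set.singleton_eq_singleton_iff.mp h),
      mk_arrow_bool, Cardinal.mk_out]
  · rintro F ⟨f, rfl⟩
    have h1 : (1 : Cardinal.{u}) ∈ {δ' : Cardinal.{u} |
        ∀ A : Set (Quotient.out κ), #A = δ' → ¬ Shatters {f} A} := by
      intro A hA hsh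
      have hne : A.Nonempty := by
        rw [← Set.nonempty_coe_sort, ← Cardinal.mk_ne_zero_iff, hA]
        exact one_ne_zero
      obtain ⟨x, hx⟩ := hne
      obtain ⟨f', hf', hff⟩ := hsh (fun z => !(f z))
      rw [Set.mem_singleton_iff] at hf'
      subst hf'
      have := hff x hx
      simp at this
    calc sdim ({f} : Set (Quotient.out κ → Bool)) ≤ 1 := csInf_le (OrderBot.bddBelow _) h1
      _ < 2 := one_lt_two
      _ ≤ δ := hδ
  · ext g
    simp only [Set.mem_sUnion, Set.mem_univ, iff_true]
    exact ⟨{g}, ⟨g, rfl⟩, rfl⟩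

lemma stringCov_le (κ δ : Cardinal.{u}) (hδ : 2 ≤ δ) : StringCov δ κ ≤ 2 ^ κ :=
  csInf_le (OrderBot.bddBelow _) (two_power_mem_stringCovSet κ δ hδ)

/-- Lower bound for `StringCov`. -/
lemma le_stringCov (κ : Cardinal.{u}) (hκ : κ.IsStrongLimit) (δ : Cardinal.{u})
    (hδ : ∀ δ' < δ, 2 ^ δ' < (Cardinal.ord κ).cof) (hδ2 : 2 ≤ δ) :
    2 ^ κ ≤ StringCov δ κ := by
  apply le_csInf ⟨_, two_power_mem_stringCovSet κ δ hδ2⟩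
  rintro c ⟨𝒜, hc, hs, hu⟩
  by_contra hlt
  push_neg at hlt
  obtain ⟨Φ, hΦinj, hΦ⟩ := exists_coding κ hκ
  have hB : #(Set.range Φ) = 2 ^ κ := by
    rw [Cardinal.mk_range_eq _ hΦinj, mk_arrow_bool, Cardinal.mk_ord_toType]
  -- some member of the cover meets the range of Φ in a set of size ≥ κ
  have hbig : ∃ F ∈ 𝒜, κ ≤ #(F ∩ Set.range Φ : Set _) := by
    by_contra hsmall
    push_neg at hsmall
    have hcover : Set.range Φ = ⋃ F : 𝒜, ((F : Set _) ∩ Set.range Φ) := by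
      ext x
      simp only [Set.mem_iUnion, Set.mem_inter_iff]
      constructor
      · intro hx
        have : x ∈ ⋃₀ 𝒜 := by rw [hu]; trivial
        obtain ⟨F, hF, hxF⟩ := this
        exact ⟨⟨F, hF⟩, hxF, hx⟩
      · rintro ⟨F, _, hx⟩
        exact hx
    have hle : (2 : Cardinal.{u}) ^ κ ≤ #𝒜 * κ := by
      rw [← hB, hcover]
      calc #(⋃ F : 𝒜, ((F : Set _) ∩ Set.range Φ)) ≤
          #𝒜 * ⨆ F : 𝒜, #((F : Set _) ∩ Set.range Φ : Set _) := Cardinal.mk_iUnion_le _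
        _ ≤ #𝒜 * κ := by
            apply mul_le_mul_right
            exact ciSup_le' (fun F => (hsmall F F.2).le)
    have : #𝒜 * κ < 2 ^ κ := by
      apply Cardinal.mul_lt_of_lt
      · exact hκ.aleph0_le.trans (Cardinal.cantor κ).le
      · rw [hc]; exact hlt
      · exact Cardinal.cantor κ
    exact absurd (hle.trans_lt this) (lt_irrefl _)
  obtain ⟨F, hF𝒜, hFbig⟩ := hbig
  -- transfer to the preimage
  have hpre : κ ≤ #(Φ ⁻¹' F) := by
    refine le_trans hFbig (Cardinal.mk_le_of_surjective
      (f := fun x : (Φ ⁻¹' F : Set _) => (⟨Φ x, x.2, Set.mem_range_self _⟩ :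
        (F ∩ Set.range Φ : Set _))) ?_)
    rintro ⟨y, hyF, x, rfl⟩
    exact ⟨⟨x, hyF⟩, rfl⟩
  set μ := sdim F with hμ
  have hμδ : μ < δ := hs F hF𝒜
  have hμcof : 2 ^ μ < (Cardinal.ord κ).cof := hδ μ hμδ
  have hμκ : 2 ^ μ ≤ #(Φ ⁻¹' F) :=
    le_trans (le_trans hμcof.le (Ordinal.cof_ord_le κ)) hpre
  obtain ⟨A, hA, hAsh⟩ := hΦ F μ hμcof hμκ
  -- but `sdim F` belongs to the defining set, so no set of size `μ` is shattered
  have hmem : μ ∈ {δ' : Cardinal.{u} |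
      ∀ A : Set (Quotient.out κ), #A = δ' → ¬ Shatters F A} := by
    rw [hμ, sdim]
    apply csInf_mem
    refine ⟨Order.succ κ, fun A hA hsh => ?_⟩
    have : #A ≤ κ := le_of_le_of_eq (Cardinal.mk_set_le A) (Cardinal.mk_out κ)
    rw [hA] at this
    exact absurd this (not_le.mpr (Order.lt_succ κ))
  exact hmem A hA hAsh

/-- If `κ` is a strong limit and `δ` is least with `2^δ ≥ cf(κ)`, then
`𝔰𝔡(δ,κ) = 2^κ`. In particular if `κ` is strongly inaccessible then `𝔰𝔡(κ,κ) = 2^κ`,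
and hence `𝔰𝔡(δ,κ) = 2^κ` for all infinite `δ ≤ κ`. -/
theorem stmt14 (κ : Cardinal.{u}) (hκ : κ.IsStrongLimit) :
    (∀ δ : Cardinal.{u},
      ((Cardinal.ord κ).cof ≤ 2 ^ δ ∧ ∀ δ' < δ, 2 ^ δ' < (Cardinal.ord κ).cof) →
      StringCov δ κ = 2 ^ κ) ∧
    (κ.IsInaccessible →
      StringCov κ κ = 2 ^ κ ∧ ∀ δ : Cardinal.{u}, ℵ₀ ≤ δ → δ ≤ κ → StringCov δ κ = 2 ^ κ) := by
  have haleph0cof : ℵ₀ ≤ (Cardinal.ord κ).cof :=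
    Ordinal.aleph0_le_cof.2 (Cardinal.isSuccLimit_ord hκ.aleph0_le)
  have part1 : ∀ δ : Cardinal.{u},
      ((Cardinal.ord κ).cof ≤ 2 ^ δ ∧ ∀ δ' < δ, 2 ^ δ' < (Cardinal.ord κ).cof) →
      StringCov δ κ = 2 ^ κ := by
    rintro δ ⟨h1, h2⟩
    have hδinf : ℵ₀ ≤ δ := by
      by_contra h
      push_neg at h
      have : (2 : Cardinal.{u}) ^ δ < ℵ₀ :=
        Cardinal.power_lt_aleph0 (by exact Cardinal.nat_lt_aleph0 2) h
      exact absurd (haleph0cof.trans h1) (not_le.mpr this)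
    have hδ2 : 2 ≤ δ :=
      le_trans (by exact_mod_cast (Cardinal.nat_lt_aleph0 2).le) hδinf
    exact le_antisymm (stringCov_le κ δ hδ2) (le_stringCov κ hκ δ h2 hδ2)
  refine ⟨part1, fun hin => ?_⟩
  have hcof : (Cardinal.ord κ).cof = κ := hin.isRegular.cof_ord
  have hκκ : StringCov κ κ = 2 ^ κ := by
    apply part1 κ
    constructor
    · rw [hcof]; exact (Cardinal.cantor κ).le
    · intro δ' hδ'
      rw [hcof]
      exact hκ.two_power_lt hδ'
  refine ⟨hκκ, fun δ hδinf hδκ => ?_⟩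
  have hδ2 : 2 ≤ δ :=
    le_trans (by exact_mod_cast (Cardinal.nat_lt_aleph0 2).le) hδinf
  apply le_antisymm (stringCov_le κ δ hδ2)
  rw [← hκκ]
  apply csInf_le_csInf (OrderBot.bddBelow _) ⟨_, two_power_mem_stringCovSet κ δ hδ2⟩
  rintro c ⟨𝒜, hc, hs, hu⟩
  exact ⟨𝒜, hc, fun F hF => lt_of_lt_of_le (hs F hF) hδκ, hu⟩
end

section
/- For every strong limit cardinal κ there is a tree T ⊆ 2^{<κ} of height κ whose set of cofinal branches [T] has cardinality 2^κ, such that every subset A ⊆ [T] with |A| ≥ κ shatters subsets of κ of every cardinality δ with 2^δ < cf(κ). -/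
universe u

open Cardinal

/-- The canonical well-order of order type `κ`, realising the ordinals `< κ`. -/
abbrev OrdType (κ : Cardinal.{u}) : Type u := (Cardinal.ord κ).ToType

/-- A node of `2^{<κ}`: a length `a < κ` together with a binary string of that length. -/
def TreeNode (κ : Cardinal.{u}) : Type u :=
  Σ a : OrdType κ, (↥(Set.Iio a) → Bool)

/-- The initial segment of the branch `x : 2^κ` of length `a`. -/
def nodeOf {κ : Cardinal.{u}} (x : OrdType κ → Bool) (a : OrdType κ) : TreeNode κ :=
  ⟨a, fun b => x b.1⟩

/-- The restriction of a node to a smaller length `b`. -/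
def resNode {κ : Cardinal.{u}} (p : TreeNode κ) (b : OrdType κ) (hb : b ≤ p.1) :
    TreeNode κ :=
  ⟨b, fun c => p.2 ⟨c.1, lt_of_lt_of_le c.2 hb⟩⟩

/-- The cofinal branches of a tree `T ⊆ 2^{<κ}`. -/
def Branches {κ : Cardinal.{u}} (T : Set (TreeNode κ)) : Set (OrdType κ → Bool) :=
  {x | ∀ a : OrdType κ, nodeOf x a ∈ T}

namespace Stmt15Aux

open Set

/-- Labels for constrained coordinates: a level `a` together with an arbitrary
Boolean function of the binary strings of length `a`. -/
abbrev PP (κ : Cardinal.{u}) : Type u :=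
  Σ a : OrdType κ, ((↥(Set.Iio a) → Bool) → Bool)

variable {κ : Cardinal.{u}}

lemma mk_ordType : #(OrdType κ) = κ := by
  rw [Cardinal.mk_toType, Cardinal.card_ord]

lemma mk_Iio_lt (a : OrdType κ) : #(Set.Iio a) < κ :=
  Cardinal.mk_Iio_ord_toType a

lemma exists_gt' (hκ : κ.IsStrongLimit) (α : OrdType κ) : ∃ b : OrdType κ, α < b := by
  have : NoMaxOrder (OrdType κ) := Cardinal.noMaxOrder hκ.aleph0_le
  exact exists_gt α

lemma mk_PP (hκ : κ.IsStrongLimit) : #(PP κ) = κ := by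
  apply le_antisymm
  · have h1 : #(PP κ) = Cardinal.sum fun a : OrdType κ => #((↥(Set.Iio a) → Bool) → Bool) :=
      Cardinal.mk_sigma _
    have h2 : ∀ a : OrdType κ, #((↥(Set.Iio a) → Bool) → Bool) ≤ κ := by
      intro a
      have h3 : #((↥(Set.Iio a) → Bool) → Bool) = 2 ^ ((2 : Cardinal) ^ #(Set.Iio a)) := by
        simp [Cardinal.mk_arrow]
      rw [h3]
      exact (hκ.two_power_lt (hκ.two_power_lt (mk_Iio_lt a))).le
    calc #(PP κ) ≤ Cardinal.sum fun _ : OrdType κ => κ := by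
          rw [h1]; exact Cardinal.sum_le_sum _ _ h2
      _ = #(OrdType κ) * κ := Cardinal.sum_const' _ _
      _ = κ := by rw [mk_ordType]; exact Cardinal.mul_eq_self hκ.aleph0_le
  · have : Function.Injective (fun a : OrdType κ => (⟨a, fun _ => false⟩ : PP κ)) := by
      intro a b h
      exact congrArg Sigma.fst h
    calc κ = #(OrdType κ) := mk_ordType.symm
      _ ≤ #(PP κ) := Cardinal.mk_le_of_injective this

lemma avoid (hκ : κ.IsStrongLimit) {Odd : Set (OrdType κ)} (hOdd : κ ≤ #Odd)
    (a : OrdType κ) (s : Set (OrdType κ)) (hs : #s < κ) :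
    ((Odd ∩ Set.Ici a) \ s).Nonempty := by
  rw [Set.nonempty_iff_ne_empty]
  intro h
  have hsub : Odd ⊆ Set.Iio a ∪ s := by
    intro x hx
    rcases lt_or_ge x a with hlt | hle
    · exact Or.inl hlt
    · right
      by_contra hxs
      exact (Set.eq_empty_iff_forall_notMem.mp h x) ⟨⟨hx, hle⟩, hxs⟩
  have : κ ≤ #(Set.Iio a) + #s :=
    (hOdd.trans (Cardinal.mk_le_mk_of_subset hsub)).trans (Cardinal.mk_union_le _ _)
  exact absurd this (not_le_of_gt (Cardinal.add_lt_of_lt hκ.aleph0_le (mk_Iio_lt a) hs))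

lemma exists_injection (hκ : κ.IsStrongLimit) (g : PP κ → Set (OrdType κ))
    (hg : ∀ p (s : Set (OrdType κ)), #s < κ → (g p \ s).Nonempty) :
    ∃ F : PP κ → OrdType κ, Function.Injective F ∧ ∀ p, F p ∈ g p := by
  obtain ⟨w⟩ : Nonempty (OrdType κ ≃ PP κ) :=
    Cardinal.eq.mp (mk_ordType.trans (mk_PP hκ).symm)
  have wf : WellFounded ((· < ·) : OrdType κ → OrdType κ → Prop) := IsWellFounded.wf
  have key : ∀ (i : OrdType κ) (rec : ∀ j, j < i → OrdType κ),
      ((g (w i)) \ {x | ∃ j, ∃ h : j < i, rec j h = x}).Nonempty := by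
    intro i rec
    apply hg
    have hsub : {x | ∃ j, ∃ h : j < i, rec j h = x} ⊆
        Set.range (fun j : ↥(Set.Iio i) => rec j.1 j.2) := by
      rintro x ⟨j, hj, rfl⟩
      exact ⟨⟨j, hj⟩, rfl⟩
    exact (Cardinal.mk_le_mk_of_subset hsub).trans_lt
      (Cardinal.mk_range_le.trans_lt (mk_Iio_lt i))
  set F0 : OrdType κ → OrdType κ :=
    wf.fix (fun i rec => (key i rec).some) with hF0def
  have hF0 : ∀ i, F0 i = (key i (fun j _ => F0 j)).some := by
    intro i
    rw [hF0def]
    exact wf.fix_eq _ i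
  have hmem : ∀ i, F0 i ∈ g (w i) \ {x | ∃ j, ∃ _ : j < i, F0 j = x} := by
    intro i
    rw [hF0 i]
    exact (key i _).some_mem
  have hinj : Function.Injective F0 := by
    intro i j hij
    by_contra hne
    rcases lt_or_gt_of_ne hne with h | h
    · exact (hmem j).2 ⟨i, h, hij⟩
    · exact (hmem i).2 ⟨j, h, hij.symm⟩
  refine ⟨F0 ∘ w.symm, hinj.comp w.symm.injective, fun p => ?_⟩
  have := (hmem (w.symm p)).1
  rwa [Equiv.apply_symm_apply] at this

variable (pos : PP κ → OrdType κ)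

open Classical in
noncomputable def Xf (hpos : ∀ p : PP κ, p.1 ≤ pos p) (v : OrdType κ → Bool) :
    OrdType κ → Bool :=
  (IsWellFounded.wf (α := OrdType κ) (r := (· < ·))).fix
    (fun α rec =>
      if h : ∃ p, pos p = α then
        h.choose.2 (fun b => rec b.1 (lt_of_lt_of_le b.2 ((hpos h.choose).trans_eq h.choose_spec)))
      else v α)

open Classical in
theorem Xf_eq (hpos : ∀ p : PP κ, p.1 ≤ pos p) (v : OrdType κ → Bool) (α : OrdType κ) :
    Xf pos hpos v α = if h : ∃ p, pos p = α then
        h.choose.2 (fun b => Xf pos hpos v b.1)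
      else v α := by
  unfold Xf
  exact WellFounded.fix_eq _ _ _

open Classical in
theorem Xf_neg (hpos : ∀ p : PP κ, p.1 ≤ pos p) (v : OrdType κ → Bool) (α : OrdType κ)
    (h : ¬ ∃ p, pos p = α) : Xf pos hpos v α = v α := by
  rw [Xf_eq, dif_neg h]

open Classical in
theorem Xf_pos (hpos : ∀ p : PP κ, p.1 ≤ pos p) (hinj : Function.Injective pos)
    (v : OrdType κ → Bool) (p : PP κ) :
    Xf pos hpos v (pos p) = p.2 (fun b => Xf pos hpos v b.1) := by
  have h : ∃ q, pos q = pos p := ⟨p, rfl⟩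
  rw [Xf_eq, dif_pos h]
  have e : h.choose = p := hinj h.choose_spec
  rw [e]

/-- The tree: a node is in the tree iff at every constrained coordinate below its length,
its value is computed from its earlier values by the corresponding Boolean function. -/
def Tr (hpos : ∀ p : PP κ, p.1 ≤ pos p) : Set (TreeNode κ) :=
  {q | ∀ (p : PP κ) (h : pos p < q.1),
    q.2 ⟨pos p, h⟩ = p.2 (fun b => q.2 ⟨b.1, (b.2.trans_le (hpos p)).trans h⟩)}

theorem mem_branches_iff (hpos : ∀ p : PP κ, p.1 ≤ pos p) (x : OrdType κ → Bool) :
    x ∈ Branches (Tr pos hpos) ↔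
      ∀ (a : OrdType κ) (p : PP κ), pos p < a → x (pos p) = p.2 (fun b => x b.1) :=
  Iff.rfl

theorem Xf_mem_branches (hpos : ∀ p : PP κ, p.1 ≤ pos p) (hinj : Function.Injective pos)
    (v : OrdType κ → Bool) : Xf pos hpos v ∈ Branches (Tr pos hpos) := by
  intro a p _
  exact Xf_pos pos hpos hinj v p

theorem branch_eval (hκ : κ.IsStrongLimit) (hpos : ∀ p : PP κ, p.1 ≤ pos p)
    {x : OrdType κ → Bool} (hx : x ∈ Branches (Tr pos hpos)) (p : PP κ) :
    x (pos p) = p.2 (fun b => x b.1) := by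
  obtain ⟨a, ha⟩ := exists_gt' hκ (pos p)
  exact hx a p ha

end Stmt15Aux

open Stmt15Aux

/-- For every strong limit `κ` there is a tree `T ⊆ 2^{<κ}` (closed under restriction)
of height `κ` with `2^κ` cofinal branches, such that every `A ⊆ [T]` with `|A| ≥ κ`
shatters subsets of `κ` of every cardinality `δ` with `2^δ < cf(κ)`. -/
theorem stmt15 (κ : Cardinal.{u}) (hκ : κ.IsStrongLimit) :
    ∃ T : Set (TreeNode κ),
      (∀ p ∈ T, ∀ (b : OrdType κ) (hb : b ≤ p.1), resNode p b hb ∈ T) ∧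
      (∀ a : OrdType κ, ∃ t : ↥(Set.Iio a) → Bool, (⟨a, t⟩ : TreeNode κ) ∈ T) ∧
      #(Branches T) = 2 ^ κ ∧
      (∀ A : Set (OrdType κ → Bool), A ⊆ Branches T → κ ≤ #A →
        ∀ δ : Cardinal.{u}, 2 ^ δ < (Cardinal.ord κ).cof →
          ∃ S : Set (OrdType κ), #S = δ ∧ Shatters A S) := by
  classical
  -- split `OrdType κ` into two pieces of full size
  obtain ⟨q⟩ : Nonempty (OrdType κ ≃ (OrdType κ ⊕ OrdType κ)) := by
    apply Cardinal.eq.mp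
    simp only [Cardinal.mk_sum, Cardinal.lift_id, mk_ordType]
    rw [Cardinal.add_eq_self hκ.aleph0_le]
  have hOddinj : Function.Injective (fun β : OrdType κ => q.symm (Sum.inl β)) :=
    fun a b h => Sum.inl.inj (q.symm.injective h)
  have hEveninj : Function.Injective (fun β : OrdType κ => q.symm (Sum.inr β)) :=
    fun a b h => Sum.inr.inj (q.symm.injective h)
  have hOddcard : #(Set.range (fun β : OrdType κ => q.symm (Sum.inl β))) = κ := by
    rw [Cardinal.mk_range_eq _ hOddinj, mk_ordType]
  have hEvencard : #(Set.range (fun β : OrdType κ => q.symm (Sum.inr β))) = κ := by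
    rw [Cardinal.mk_range_eq _ hEveninj, mk_ordType]
  have hdisj : ∀ α : OrdType κ, α ∈ Set.range (fun β : OrdType κ => q.symm (Sum.inr β)) →
      α ∉ Set.range (fun β : OrdType κ => q.symm (Sum.inl β)) := by
    rintro α ⟨β, rfl⟩ ⟨γ, hγ⟩
    exact Sum.inl_ne_inr (q.symm.injective hγ)
  -- the injection picking positions for the constrained coordinates
  obtain ⟨pos, hinj, hin⟩ := exists_injection hκ
    (fun p => (Set.range fun β : OrdType κ => q.symm (Sum.inl β)) ∩ Set.Ici p.1)
    (fun p s hs => avoid hκ hOddcard.ge p.1 s hs)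
  have hpos : ∀ p : PP κ, p.1 ≤ pos p := fun p => (hin p).2
  have hposOdd : ∀ p : PP κ, pos p ∈ Set.range (fun β : OrdType κ => q.symm (Sum.inl β)) :=
    fun p => (hin p).1
  refine ⟨Tr pos hpos, ?_, ?_, ?_, ?_⟩
  · -- closed under restriction
    intro p hp b hb pp h
    exact hp pp (lt_of_lt_of_le h hb)
  · -- all levels nonempty
    intro a
    exact ⟨fun c => Xf pos hpos (fun _ => false) c.1,
      fun pp h => Xf_pos pos hpos hinj _ pp⟩
  · -- number of branches
    apply le_antisymm
    · calc #(Branches (Tr pos hpos)) ≤ #(OrdType κ → Bool) := Cardinal.mk_set_le _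
        _ = 2 ^ κ := by simp [Cardinal.mk_arrow, mk_ordType]
    · have hval : ∀ (u : ↥(Set.range fun β : OrdType κ => q.symm (Sum.inr β)) → Bool)
          (e : ↥(Set.range fun β : OrdType κ => q.symm (Sum.inr β))),
          Xf pos hpos (fun α => if h : α ∈ (Set.range fun β : OrdType κ => q.symm (Sum.inr β))
            then u ⟨α, h⟩ else false) e.1 = u e := by
        intro u e
        rw [Xf_neg]
        · rw [dif_pos e.2]
        · rintro ⟨pp, hppe⟩
          have h1 := hposOdd pp
          rw [hppe] at h1
          exact hdisj e.1 e.2 h1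
      have hJinj : Function.Injective
          (fun u : ↥(Set.range fun β : OrdType κ => q.symm (Sum.inr β)) → Bool =>
            (⟨Xf pos hpos (fun α =>
                if h : α ∈ (Set.range fun β : OrdType κ => q.symm (Sum.inr β))
                then u ⟨α, h⟩ else false),
              Xf_mem_branches pos hpos hinj _⟩ : ↥(Branches (Tr pos hpos)))) := by
        intro u u' he
        funext e
        have h2 := congrArg (fun z : ↥(Branches (Tr pos hpos)) => z.1 e.1) he
        simp only at h2
        rw [hval u e, hval u' e] at h2
        exact h2
      have h3 : #(↥(Set.range fun β : OrdType κ => q.symm (Sum.inr β)) → Bool) = 2 ^ κ := by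
        simp [Cardinal.mk_arrow, hEvencard]
      rw [← h3]
      exact Cardinal.mk_le_of_injective hJinj
  · -- shattering
    intro A hA hAκ δ hδ
    have hcofle : (Cardinal.ord κ).cof ≤ κ := Ordinal.cof_ord_le κ
    have h2δκ : (2 : Cardinal) ^ δ ≤ κ := le_of_lt (lt_of_lt_of_le hδ hcofle)
    have hout : #(δ.out → Bool) = 2 ^ δ := by
      simp [Cardinal.mk_arrow, Cardinal.mk_out]
    obtain ⟨x⟩ : Nonempty ((δ.out → Bool) ↪ ↥A) := by
      rw [← Cardinal.le_def, hout]
      exact h2δκ.trans hAκ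
    have hne : Nonempty (OrdType κ) := by
      rw [Ordinal.toType_nonempty_iff_ne_zero]
      intro h0
      have := Cardinal.card_ord κ
      rw [h0] at this
      exact hκ.ne_zero (by simpa using this.symm)
    have hdiff : ∀ g g' : δ.out → Bool, ∃ d : OrdType κ,
        g ≠ g' → (x g).1 d ≠ (x g').1 d := by
      intro g g'
      by_cases h : g = g'
      · exact ⟨hne.some, fun hn => absurd h hn⟩
      · have : (x g).1 ≠ (x g').1 := by
          intro hcontra
          exact h (x.injective (Subtype.ext hcontra))
        obtain ⟨d, hd⟩ := Function.ne_iff.mp this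
        exact ⟨d, fun _ => hd⟩
    choose dfun hdfun using hdiff
    -- a level above all divergence points
    have hbdd : ∃ astar : OrdType κ, ∀ g g' : δ.out → Bool, dfun g g' < astar := by
      have hDcard : #(Set.range (fun gg' : (δ.out → Bool) × (δ.out → Bool) =>
          dfun gg'.1 gg'.2)) < (Cardinal.ord κ).cof := by
        refine lt_of_le_of_lt Cardinal.mk_range_le ?_
        have hprod : #((δ.out → Bool) × (δ.out → Bool)) = (2 ^ δ) * (2 ^ δ) := by
          simp [Cardinal.mk_prod, hout]
        rw [hprod]
        rcases lt_or_ge ((2 : Cardinal) ^ δ) ℵ₀ with hfin | hinf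
        · exact (Cardinal.mul_lt_aleph0 hfin hfin).trans_le
            (Ordinal.aleph0_le_cof.mpr (Cardinal.isSuccLimit_ord hκ.aleph0_le))
        · rwa [Cardinal.mul_eq_self hinf]
      have hb2 : ¬ IsCofinal
          (Set.range (fun gg' : (δ.out → Bool) × (δ.out → Bool) => dfun gg'.1 gg'.2)) :=
        fun hc => (Order.cof_le hc).not_gt (by rwa [Ordinal.cof_toType])
      obtain ⟨astar, hastar⟩ := not_isCofinal_iff.mp hb2
      exact ⟨astar, fun g g' => hastar _ ⟨(g, g'), rfl⟩⟩
    obtain ⟨astar, hastar⟩ := hbdd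
    -- the restrictions to level astar are injective
    have hrestinj : Function.Injective
        (fun g : δ.out → Bool => (fun b : ↥(Set.Iio astar) => (x g).1 b.1)) := by
      intro g g' hgg
      by_contra hne'
      have hd := hdfun g g' hne'
      have := congrFun hgg ⟨dfun g g', hastar g g'⟩
      exact hd this
    -- the Boolean functions realising the patterns
    have hU : ∀ (β : δ.out) (g : δ.out → Bool),
        (fun w : ↥(Set.Iio astar) → Bool =>
          decide (∃ g' : δ.out → Bool, g' β = true ∧
            (fun b : ↥(Set.Iio astar) => (x g').1 b.1) = w))
          (fun b : ↥(Set.Iio astar) => (x g).1 b.1) = g β := by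
      intro β g
      cases hgb : g β with
      | true =>
        apply decide_eq_true
        exact ⟨g, hgb, rfl⟩
      | false =>
        apply decide_eq_false
        rintro ⟨g', hg'β, hrest⟩
        have := hrestinj hrest
        rw [this] at hg'β
        rw [hgb] at hg'β
        exact Bool.false_ne_true hg'β
    -- the labels
    have hppinj : Function.Injective (fun β : δ.out =>
        (⟨astar, fun w : ↥(Set.Iio astar) → Bool =>
          decide (∃ g' : δ.out → Bool, g' β = true ∧
            (fun b : ↥(Set.Iio astar) => (x g').1 b.1) = w)⟩ : PP κ)) := by
      intro β γ h
      by_contra hbg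
      simp only [Sigma.mk.inj_iff, heq_eq_eq, true_and] at h
      have e3 := congrFun h (fun b : ↥(Set.Iio astar) =>
        (x (fun i : δ.out => decide (i = β))).1 b.1)
      have e1 := hU β (fun i : δ.out => decide (i = β))
      have e2 := hU γ (fun i : δ.out => decide (i = β))
      have efin := e1.symm.trans (e3.trans e2)
      simp [Ne.symm hbg] at efin
    refine ⟨Set.range (fun β : δ.out => pos
      (⟨astar, fun w : ↥(Set.Iio astar) → Bool =>
        decide (∃ g' : δ.out → Bool, g' β = true ∧
          (fun b : ↥(Set.Iio astar) => (x g').1 b.1) = w)⟩ : PP κ)), ?_, ?_⟩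
    · have hre := Cardinal.mk_range_eq (fun β : δ.out => pos
        (⟨astar, fun w : ↥(Set.Iio astar) → Bool =>
          decide (∃ g' : δ.out → Bool, g' β = true ∧
            (fun b : ↥(Set.Iio astar) => (x g').1 b.1) = w)⟩ : PP κ))
        (fun β γ hh => hppinj (hinj hh))
      rw [hre, Cardinal.mk_out]
    · -- Shatters
      intro gt
      refine ⟨(x (fun β : δ.out => gt (pos
        (⟨astar, fun w : ↥(Set.Iio astar) → Bool =>
          decide (∃ g' : δ.out → Bool, g' β = true ∧
            (fun b : ↥(Set.Iio astar) => (x g').1 b.1) = w)⟩ : PP κ)))).1,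
        (x _).2, ?_⟩
      rintro s ⟨β, rfl⟩
      have hb := branch_eval pos hκ hpos
        (hA (x (fun β : δ.out => gt (pos
          (⟨astar, fun w : ↥(Set.Iio astar) → Bool =>
            decide (∃ g' : δ.out → Bool, g' β = true ∧
              (fun b : ↥(Set.Iio astar) => (x g').1 b.1) = w)⟩ : PP κ)))).2)
        (⟨astar, fun w : ↥(Set.Iio astar) → Bool =>
          decide (∃ g' : δ.out → Bool, g' β = true ∧
            (fun b : ↥(Set.Iio astar) => (x g').1 b.1) = w)⟩ : PP κ)
      rw [hb]
      exact hU β _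
end
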